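/- Let a ≥ 1 be odd, p a prime with gcd(a, p) = 1, n > 1 odd, and a² - 4p^n = -c²d with d squarefree. Then the prime p splits in Q(√(-d)); in particular, the ideal (p) factors as a product of two distinct prime ideals in the ring of integers of Q(√(-d)). -/

import Mathlib

open NumberField Polynomial Module IntermediateField

lemma minpoly_quad {K : Type} [Field K] [NumberField K]
    (x : K) (b c : ℚ) (hx : x ^ 2 + algebraMap ℚ K b * x + algebraMap ℚ K c = 0)
    (hirr : x ∉ (algebraMap ℚ K).range) :
    minpoly ℚ x = C 1 * X ^ 2 + C b * X + C c := by
  have hint : IsIntegral ℚ x := IsIntegral.of_finite ℚ x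
  set q : ℚ[X] := C 1 * X ^ 2 + C b * X + C c with hq
  have hqmonic : q.Monic := by rw [Monic, hq, leadingCoeff_quadratic one_ne_zero]
  have haq : aeval x q = 0 := by
    simp only [hq, map_add, map_mul, map_pow, aeval_X, aeval_C, map_one, one_mul]
    exact hx
  have hdvd : minpoly ℚ x ∣ q := minpoly.dvd ℚ x haq
  have hqdeg : q.natDegree = 2 := natDegree_quadratic one_ne_zero
  have hmdeg : (minpoly ℚ x).natDegree = 2 := by
    have hle : (minpoly ℚ x).natDegree ≤ 2 := hqdeg ▸
      Polynomial.natDegree_le_of_dvd hdvd hqmonic.ne_zero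
    have hpos : 0 < (minpoly ℚ x).natDegree := minpoly.natDegree_pos hint
    have hne1 : (minpoly ℚ x).natDegree ≠ 1 := by
      intro h1
      have : (minpoly ℚ x).degree = 1 := by
        rw [degree_eq_natDegree (minpoly.ne_zero hint), h1]; rfl
      exact hirr ((minpoly.degree_eq_one_iff).mp this)
    omega
  obtain ⟨r, hr⟩ := hdvd
  have hrmonic : r.Monic := ((minpoly.monic hint).of_mul_monic_left (hr ▸ hqmonic))
  have hrdeg : r.natDegree = 0 := by
    have h2 := hr ▸ hqdeg
    rw [natDegree_mul (minpoly.ne_zero hint) hrmonic.ne_zero, hmdeg] at h2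
    omega
  have : r = 1 := Polynomial.eq_one_of_monic_natDegree_zero hrmonic hrdeg
  rw [hr, this, mul_one]

lemma norm_quad {K : Type} [Field K] [NumberField K] (hdim : Module.finrank ℚ K = 2)
    (x : K) (b c : ℚ) (hx : x ^ 2 + algebraMap ℚ K b * x + algebraMap ℚ K c = 0)
    (hirr : x ∉ (algebraMap ℚ K).range) : Algebra.norm ℚ x = c := by
  have hint : IsIntegral ℚ x := IsIntegral.of_finite ℚ x
  have hmin := minpoly_quad x b c hx hirr
  have hmdeg : (minpoly ℚ x).natDegree = 2 := by
    rw [hmin]; exact natDegree_quadratic one_ne_zero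
  have h1 : finrank ℚ ℚ⟮x⟯ = 2 := by rw [IntermediateField.adjoin.finrank hint, hmdeg]
  have h2 : finrank (↥ℚ⟮x⟯) K = 1 := by
    have h3 := Module.finrank_mul_finrank ℚ (↥ℚ⟮x⟯) K
    rw [h1, hdim] at h3
    omega
  rw [Algebra.norm_eq_norm_adjoin ℚ x, h2, pow_one]
  have hpb := Algebra.PowerBasis.norm_gen_eq_coeff_zero_minpoly (IntermediateField.adjoin.powerBasis hint)
  rw [IntermediateField.adjoin.powerBasis_gen] at hpb
  rw [hpb, IntermediateField.adjoin.powerBasis_dim, IntermediateField.minpoly_gen, hmdeg, hmin]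
  simp [coeff_C]

/-- Let `a ≥ 1` be odd, `p` a prime with `gcd(a,p) = 1`, `n > 1` odd, and
`a² - 4p^n = -c²d` with `d` squarefree. Then `p` splits in `K = ℚ(√-d)`: the ideal `(p)`
factors as a product of two distinct prime ideals of the ring of integers of `K`. -/
theorem stmt_12 (a p n c d : ℕ) (ha0 : 0 < a) (ha : Odd a) (hp : p.Prime)
    (hcop : Nat.Coprime a p) (hn1 : 1 < n) (hn : Odd n) (hc : 0 < c) (hd : Squarefree d)
    (h : (a : ℤ) ^ 2 - 4 * p ^ n = -(c ^ 2 * d))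
    (K : Type) [Field K] [NumberField K] (hdim : Module.finrank ℚ K = 2)
    (ω : K) (hω : ω ^ 2 = -(d : K)) :
    ∃ P Q : Ideal (𝓞 K), P ≠ Q ∧ P.IsPrime ∧ Q.IsPrime ∧
      Ideal.span {(p : 𝓞 K)} = P * Q := by
  have hd0 : d ≠ 0 := hd.ne_zero
  have keyK : (a : K) ^ 2 - 4 * (p : K) ^ n = -((c : K) ^ 2 * (d : K)) := by
    have := congrArg (fun z : ℤ => (z : K)) h
    push_cast at this
    exact_mod_cast this
  have hωirr : ω ∉ (algebraMap ℚ K).range := by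
    rintro ⟨q, hq⟩
    have h2 : algebraMap ℚ K (q ^ 2) = algebraMap ℚ K (-(d : ℚ)) := by
      rw [map_pow, hq, hω, map_neg, map_natCast]
    have h3 : q ^ 2 = -(d : ℚ) := (algebraMap ℚ K).injective h2
    have h4 : (0 : ℚ) ≤ q ^ 2 := sq_nonneg q
    have h5 : (0 : ℚ) < (d : ℚ) := by exact_mod_cast Nat.pos_of_ne_zero hd0
    rw [h3] at h4; linarith
  set α : K := ((a : K) + (c : K) * ω) / 2 with hαdef
  have hα : α ^ 2 - (a : K) * α + (p : K) ^ n = 0 := by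
    rw [hαdef]
    linear_combination ((c : K) ^ 2 / 4) * hω - (1 / 4 : K) * keyK
  have hαint : IsIntegral ℤ α := by
    refine ⟨C 1 * X ^ 2 + C (-(a : ℤ)) * X + C ((p : ℤ) ^ n), ?_, ?_⟩
    · rw [Monic, leadingCoeff_quadratic one_ne_zero]
    · rw [← aeval_def]
      simp only [map_add, map_mul, map_pow, aeval_X, aeval_C, map_one, one_mul, map_neg,
        map_intCast]
      push_cast
      linear_combination hα
  have hcK : (c : K) ≠ 0 := Nat.cast_ne_zero.mpr hc.ne'
  have hαirr : α ∉ (algebraMap ℚ K).range := by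
    rintro ⟨q, hq⟩
    apply hωirr
    refine ⟨(2 * q - a) / c, ?_⟩
    rw [map_div₀, map_sub, map_mul, map_natCast, map_natCast, map_ofNat, hq, hαdef]
    field_simp
    ring
  have hβirr : (a : K) - α ∉ (algebraMap ℚ K).range := by
    rintro ⟨q, hq⟩
    apply hαirr
    refine ⟨(a : ℚ) - q, ?_⟩
    rw [map_sub, map_natCast, hq]
    ring
  set α' : 𝓞 K := ⟨α, hαint⟩ with hα'def
  set β' : 𝓞 K := (a : 𝓞 K) - α' with hβ'def
  have hαcoe : algebraMap (𝓞 K) K α' = α := rfl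
  have hβcoe : algebraMap (𝓞 K) K β' = (a : K) - α := by
    rw [hβ'def, map_sub, map_natCast, hαcoe]
  have hprod : α' * β' = (p : 𝓞 K) ^ n := by
    ext
    rw [NumberField.RingOfIntegers.coe_eq_algebraMap, NumberField.RingOfIntegers.coe_eq_algebraMap,
      map_mul, map_pow, map_natCast, hαcoe, hβcoe]
    linear_combination -hα
  have hsum : α' + β' = (a : 𝓞 K) := by rw [hβ'def]; ring
  have hpn1 : (1 : ℚ) < (p : ℚ) ^ n := by
    have : (1 : ℚ) < (p : ℚ) := by exact_mod_cast hp.one_lt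
    exact one_lt_pow₀ this (by omega)
  have hnorm : ∀ x : 𝓞 K, (algebraMap (𝓞 K) K x) ^ 2 - (a : K) * (algebraMap (𝓞 K) K x)
      + (p : K) ^ n = 0 → (algebraMap (𝓞 K) K x) ∉ (algebraMap ℚ K).range → ¬ IsUnit x := by
    intro x hx hxirr hu
    have h1 : Algebra.norm ℚ (algebraMap (𝓞 K) K x) = ((p : ℚ) ^ n) := by
      apply norm_quad hdim _ (-(a : ℚ)) ((p : ℚ) ^ n)
      · rw [map_neg, map_natCast, map_pow, map_natCast]
        linear_combination hx
      · exact hxirr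
    rw [NumberField.isUnit_iff_norm, RingOfIntegers.coe_norm] at hu
    rw [NumberField.RingOfIntegers.coe_eq_algebraMap] at hu
    rw [h1, abs_of_pos (by linarith)] at hu
    linarith
  have hαnu : ¬ IsUnit α' := hnorm α' (by rw [hαcoe]; exact hα) (by rw [hαcoe]; exact hαirr)
  have hβnu : ¬ IsUnit β' := by
    refine hnorm β' ?_ (by rw [hβcoe]; exact hβirr)
    rw [hβcoe]
    linear_combination hα
  have hpK : (p : 𝓞 K) ≠ 0 := Nat.cast_ne_zero.mpr hp.pos.ne'
  set I : Ideal (𝓞 K) := Ideal.span {(p : 𝓞 K)} with hIdef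
  have hI0 : I ≠ ⊥ := by
    rw [hIdef, Ne, Ideal.span_singleton_eq_bot]; exact hpK
  have habs : Ideal.absNorm I = p ^ 2 := by
    rw [hIdef, Ideal.absNorm_span_singleton]
    have h1 : (p : 𝓞 K) = algebraMap ℤ (𝓞 K) (p : ℤ) := by push_cast; rfl
    have h2 := Algebra.norm_algebraMap_of_basis (RingOfIntegers.basis K) (p : ℤ)
    have h3 : Fintype.card (Free.ChooseBasisIndex ℤ (𝓞 K)) = 2 := by
      rw [← Module.finrank_eq_card_chooseBasisIndex, RingOfIntegers.rank, hdim]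
    rw [h1, h2, h3]
    simp [Int.natAbs_pow]
  have hItop : I ≠ ⊤ := by
    intro hT
    rw [hT, Ideal.absNorm_top] at habs
    have := hp.one_lt
    nlinarith [habs]
  -- key: I is not a power of a single prime ideal
  have hkey : ∀ (P : Ideal (𝓞 K)) (e : ℕ), P.IsPrime → 0 < e → I = P ^ e → False := by
    intro P e hP he hIP
    have hP0 : P ≠ ⊥ := by
      intro hbot
      apply hI0
      rw [hIP, hbot, ← Ideal.zero_eq_bot, zero_pow he.ne']
    have hPprime : Prime P := Ideal.prime_of_isPrime hP0 hP
    have hpmem : (p : 𝓞 K) ∈ P := by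
      have h1 : (p : 𝓞 K) ∈ I := Ideal.subset_span rfl
      rw [hIP] at h1
      exact (Ideal.pow_le_self he.ne') h1
    have hboth : α' ∈ P ∧ β' ∈ P := by
      have hmul : α' * β' ∈ P := by
        rw [hprod]; exact Ideal.IsPrime.pow_mem_iff_mem hP n (by omega) |>.mpr hpmem
      have main : ∀ x y : 𝓞 K, x * y = (p : 𝓞 K) ^ n → ¬ IsUnit y → y ∈ P := by
        intro x y hxy hynu
        by_contra hyP
        have hdvd1 : P ^ (e * n) ∣ Ideal.span {x} * Ideal.span {y} := by
          rw [Ideal.span_singleton_mul_span_singleton, hxy, ← Ideal.span_singleton_pow, ← hIdef,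
            hIP, ← pow_mul]
        have hnd : ¬ P ∣ Ideal.span {y} := by
          rw [Ideal.dvd_iff_le, Ideal.span_singleton_le_iff_mem]
          exact hyP
        have h2 : P ^ (e * n) ∣ Ideal.span {x} :=
          hPprime.pow_dvd_of_dvd_mul_right (e * n) hnd hdvd1
        have h3 : Ideal.span {x} ≤ Ideal.span {(p : 𝓞 K) ^ n} := by
          rw [← Ideal.span_singleton_pow, ← hIdef, hIP, ← pow_mul]
          exact Ideal.le_of_dvd h2
        rw [Ideal.span_singleton_le_span_singleton] at h3
        obtain ⟨γ, hγ⟩ := h3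
        apply hynu
        have h4 : (p : 𝓞 K) ^ n * (γ * y) = (p : 𝓞 K) ^ n * 1 := by
          linear_combination hxy - y * hγ
        have h5 : γ * y = 1 := mul_left_cancel₀ (pow_ne_zero n hpK) h4
        exact IsUnit.of_mul_eq_one γ (by rw [mul_comm]; exact h5)
      rcases hP.mem_or_mem hmul with h1 | h1
      · exact ⟨h1, main α' β' hprod hβnu⟩
      · exact ⟨main β' α' (by rw [mul_comm]; exact hprod) hαnu, h1⟩
    have haP : (a : 𝓞 K) ∈ P := by rw [← hsum]; exact P.add_mem hboth.1 hboth.2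
    obtain ⟨u, v, huv⟩ := (Nat.isCoprime_iff_coprime.mpr hcop)
    have h1 : (1 : 𝓞 K) ∈ P := by
      have h2 : (1 : 𝓞 K) = algebraMap ℤ (𝓞 K) u * (a : 𝓞 K) + algebraMap ℤ (𝓞 K) v * (p : 𝓞 K) := by
        have h3 := congrArg (algebraMap ℤ (𝓞 K)) huv
        push_cast at h3 ⊢
        linear_combination h3.symm
      rw [h2]
      exact P.add_mem (P.mul_mem_left _ haP) (P.mul_mem_left _ hpmem)
    exact hP.ne_top ((Ideal.eq_top_iff_one P).mpr h1)
  -- factorization counting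
  classical
  set s := UniqueFactorizationMonoid.normalizedFactors I with hsdef
  have hsprod : s.prod = I :=
    associated_iff_eq.mp (UniqueFactorizationMonoid.prod_normalizedFactors hI0)
  have hsprime : ∀ Q ∈ s, Prime Q := fun Q hQ =>
    UniqueFactorizationMonoid.prime_of_normalized_factor Q hQ
  have habs_mem : ∀ Q ∈ s, p ≤ Ideal.absNorm Q := by
    intro Q hQ
    have hQp := hsprime Q hQ
    have hQ0 : Q ≠ ⊥ := hQp.ne_zero
    have hQtop : Q ≠ ⊤ := hQp.not_unit ∘ Ideal.isUnit_iff.mpr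
    have hdvd : Ideal.absNorm Q ∣ p ^ 2 := by
      rw [← habs, ← hsprod]
      exact map_dvd Ideal.absNorm (Multiset.dvd_prod hQ)
    have hne1 : Ideal.absNorm Q ≠ 1 := fun h1 => hQtop (Ideal.absNorm_eq_one_iff.mp h1)
    have hne0 : Ideal.absNorm Q ≠ 0 := fun h0 => hQ0 (Ideal.absNorm_eq_zero_iff.mp h0)
    obtain ⟨k, hk2, hkeq⟩ := (Nat.dvd_prime_pow hp).mp hdvd
    have hk1 : 1 ≤ k := by
      rcases Nat.eq_zero_or_pos k with h0 | h1
      · exfalso; apply hne1; rw [hkeq, h0, pow_zero]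
      · exact h1
    rw [hkeq]
    calc p = p ^ 1 := (pow_one p).symm
    _ ≤ p ^ k := Nat.pow_le_pow_right hp.pos hk1
  -- card bound
  have hcard : Multiset.card s ≤ 2 := by
    have h1 : p ^ Multiset.card s ≤ (s.map Ideal.absNorm).prod := by
      rw [← Multiset.card_map Ideal.absNorm s]
      apply Multiset.pow_card_le_prod
      intro x hx
      obtain ⟨Q, hQ, rfl⟩ := Multiset.mem_map.mp hx
      exact habs_mem Q hQ
    have h2 : (s.map (fun Q => Ideal.absNorm Q)).prod = Ideal.absNorm s.prod :=
      (map_multiset_prod Ideal.absNorm s).symm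
    rw [h2, hsprod, habs] at h1
    exact (Nat.pow_le_pow_iff_right hp.one_lt).mp h1
  have hcard0 : Multiset.card s ≠ 0 := by
    intro h0
    rw [Multiset.card_eq_zero] at h0
    apply hItop
    rw [← hsprod, h0, Multiset.prod_zero]
    exact Ideal.one_eq_top
  -- conclude
  interval_cases hcs : Multiset.card s
  · omega
  · -- one prime factor: I = P, contradiction
    obtain ⟨P, hPs⟩ := Multiset.card_eq_one.mp hcs
    exfalso
    apply hkey P 1 ?_ one_pos ?_
    · exact Ideal.isPrime_of_prime (hsprime P (by rw [hPs]; simp))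
    · rw [pow_one, ← hsprod, hPs, Multiset.prod_singleton]
  · obtain ⟨P, Q, hPQs⟩ := Multiset.card_eq_two.mp hcs
    have hPp : Prime P := hsprime P (by rw [hPQs]; simp)
    have hQp : Prime Q := hsprime Q (by rw [hPQs]; simp)
    have hIPQ : I = P * Q := by
      rw [← hsprod, hPQs]
      simp [Multiset.prod_cons]
    by_cases hPQ : P = Q
    · exfalso
      apply hkey P 2 (Ideal.isPrime_of_prime hPp) two_pos
      rw [hIPQ, hPQ, pow_two]
    · exact ⟨P, Q, hPQ, Ideal.isPrime_of_prime hPp, Ideal.isPrime_of_prime hQp, hIPQ⟩
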